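/- For every n ≥ 1, there exists a rich square-free word over an alphabet of size n of length at least 2^n − 1; in particular r(n) ≥ 2^n − 1. -/

import Mathlib

/-- A word is a palindrome if it equals its reversal. -/
def Palindromic {α : Type*} (w : List α) : Prop := w.reverse = w

/-- A finite word is rich if it has exactly |w|+1 distinct palindromic factors
(including the empty word). -/
def Rich {α : Type*} (w : List α) : Prop :=
  {p : List α | p <:+: w ∧ Palindromic p}.ncard = w.length + 1

/-- A word is square-free if it has no factor of the form `u ++ u` with `u` nonempty. -/
def SqFree {α : Type*} (w : List α) : Prop :=
  ∀ u : List α, u ≠ [] → ¬ (u ++ u) <:+: w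

/-- `rsf n` : the maximal length of a rich square-free word using exactly `n` distinct
letters (letters drawn from ℕ). -/
noncomputable def rsf (n : ℕ) : ℕ :=
  sSup {L | ∃ w : List ℕ, Rich w ∧ SqFree w ∧ w.toFinset.card = n ∧ w.length = L}

namespace RichSqf

open List

/-- The finset of palindromic factors of a word. -/
def palFinset (w : List ℕ) : Finset (List ℕ) :=
  w.sublists.toFinset.filter (fun p => p <:+: w ∧ p.reverse = p)

lemma mem_palFinset {w p : List ℕ} :
    p ∈ palFinset w ↔ p <:+: w ∧ p.reverse = p := by
  simp only [palFinset, Finset.mem_filter, List.mem_toFinset, List.mem_sublists]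
  exact ⟨fun h => h.2, fun h => ⟨h.1.sublist, h⟩⟩

lemma palSet_eq (w : List ℕ) :
    {p : List ℕ | p <:+: w ∧ Palindromic p} = ↑(palFinset w) := by
  ext p; simp [mem_palFinset, Palindromic]

lemma rich_iff_card {w : List ℕ} : Rich w ↔ (palFinset w).card = w.length + 1 := by
  rw [Rich, palSet_eq, Set.ncard_coe_finset]

lemma pal_mono {u v : List ℕ} (h : u <:+: v) : palFinset u ⊆ palFinset v := by
  intro p hp
  rw [mem_palFinset] at hp ⊢
  exact ⟨hp.1.trans h, hp.2⟩

lemma pal_reverse (w : List ℕ) : palFinset w.reverse = palFinset w := by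
  ext p
  simp only [mem_palFinset]
  constructor
  · rintro ⟨h1, h2⟩
    refine ⟨?_, h2⟩
    have := List.reverse_infix.mpr h1
    rwa [h2, List.reverse_reverse] at this
  · rintro ⟨h1, h2⟩
    refine ⟨?_, h2⟩
    rw [← List.reverse_infix, List.reverse_reverse, h2]
    exact h1

lemma nil_mem_palFinset (w : List ℕ) : [] ∈ palFinset w := by
  rw [mem_palFinset]; exact ⟨List.nil_infix, rfl⟩

/-- Suffixes of the same list are comparable. -/
lemma suffix_or_suffix {u v w : List ℕ} (hu : u <:+ w) (hv : v <:+ w) :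
    u <:+ v ∨ v <:+ u := by
  have h1 : u.reverse <+: w.reverse := List.reverse_prefix.mpr (by simpa using hu)
  have h2 : v.reverse <+: w.reverse := List.reverse_prefix.mpr (by simpa using hv)
  rcases List.prefix_or_prefix_of_prefix h1 h2 with h | h
  · left; rw [← List.reverse_reverse u, ← List.reverse_reverse v]
    exact List.reverse_suffix.mpr (by simpa using h)
  · right; rw [← List.reverse_reverse u, ← List.reverse_reverse v]
    exact List.reverse_suffix.mpr (by simpa using h)

/-- A shorter palindromic suffix occurs inside the dropLast. -/
lemma pal_suffix_lt_mem_dropLast {v p q : List ℕ} (hp : p <:+ v) (hq : q <:+ v)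
    (hpp : p.reverse = p) (hqp : q.reverse = q) (hlt : p.length < q.length) :
    p <:+: v.dropLast := by
  have hpq : p <:+ q := by
    rcases suffix_or_suffix hp hq with h | h
    · exact h
    · exact absurd (h.length_le) (by omega)
  -- p is also a prefix of q
  have hpre : p <+: q := by
    have : p.reverse <+: q.reverse := by
      rw [List.reverse_prefix]
      simpa using hpq
    rwa [hpp, hqp] at this
  obtain ⟨t, ht⟩ := hpre
  have htne : t ≠ [] := by
    intro h
    rw [h, List.append_nil] at ht
    rw [ht] at hlt
    omega
  obtain ⟨g, hg⟩ := hq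
  have hv : v = g ++ p ++ t := by rw [List.append_assoc, ht, hg]
  have : v.dropLast = g ++ p ++ t.dropLast := by
    rw [hv, List.append_assoc,
      List.dropLast_append_of_ne_nil (l' := g) (by simp [htne]),
      List.dropLast_append_of_ne_nil (l' := p) htne, ← List.append_assoc]
  rw [this]
  exact ⟨g, t.dropLast, rfl⟩

lemma length_lt_of_ne_suffix {p q v : List ℕ} (hp : p <:+ v) (hq : q <:+ v) (hne : p ≠ q) :
    p.length ≠ q.length := by
  intro h
  rcases suffix_or_suffix hp hq with hs | hs
  · exact hne (List.IsSuffix.eq_of_length hs h)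
  · exact hne (List.IsSuffix.eq_of_length hs h.symm).symm

/-- A palindromic factor not occurring in dropLast is a suffix. -/
lemma suffix_of_not_mem_dropLast {v p : List ℕ} (h : p <:+: v)
    (h2 : ¬ p <:+: v.dropLast) : p <:+ v := by
  obtain ⟨s, t, hst⟩ := h
  rcases List.eq_nil_or_concat t with rfl | ⟨t', b, rfl⟩
  · exact ⟨s, by simpa using hst⟩
  · exfalso
    apply h2
    have hd : v.dropLast = s ++ p ++ t' := by
      rw [← hst, List.concat_eq_append, ← List.append_assoc, List.dropLast_concat]
    rw [hd]
    exact ⟨s, t', rfl⟩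

/-- Extending a word by one letter adds at most one palindromic factor. -/
lemma card_pal_dropLast (v : List ℕ) :
    (palFinset v).card ≤ (palFinset v.dropLast).card + 1 := by
  have hsub : palFinset v.dropLast ⊆ palFinset v :=
    pal_mono (List.dropLast_prefix v).isInfix
  by_cases hd : ∃ q ∈ palFinset v, q ∉ palFinset v.dropLast
  · obtain ⟨q, hq, hqd⟩ := hd
    have hins : palFinset v ⊆ insert q (palFinset v.dropLast) := by
      intro p hp
      rw [Finset.mem_insert]
      by_cases hpd : p ∈ palFinset v.dropLast
      · exact Or.inr hpd
      · left
        rw [mem_palFinset] at hp hq hqd hpd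
        have hps : p <:+ v := suffix_of_not_mem_dropLast hp.1 (fun h => hpd ⟨h, hp.2⟩)
        have hqs : q <:+ v := suffix_of_not_mem_dropLast hq.1 (fun h => hqd ⟨h, hq.2⟩)
        by_contra hne
        have hll : p.length ≠ q.length := length_lt_of_ne_suffix hps hqs hne
        rcases Nat.lt_or_ge p.length q.length with h | h
        · exact hpd ⟨pal_suffix_lt_mem_dropLast hps hqs hp.2 hq.2 h, hp.2⟩
        · have : q.length < p.length := by omega
          exact hqd ⟨pal_suffix_lt_mem_dropLast hqs hps hq.2 hp.2 this, hq.2⟩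
    calc (palFinset v).card ≤ (insert q (palFinset v.dropLast)).card :=
          Finset.card_le_card hins
    _ ≤ (palFinset v.dropLast).card + 1 := Finset.card_insert_le _ _
  · push_neg at hd
    have : palFinset v ⊆ palFinset v.dropLast := fun p hp => hd p hp
    calc (palFinset v).card ≤ (palFinset v.dropLast).card := Finset.card_le_card this
    _ ≤ _ := Nat.le_succ _

lemma palFinset_nil : palFinset ([] : List ℕ) = {[]} := by
  ext p
  simp only [mem_palFinset, Finset.mem_singleton]
  constructor
  · rintro ⟨h, -⟩
    exact List.eq_nil_of_length_eq_zero (Nat.le_zero.mp (by simpa using h.sublist.length_le))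
  · rintro rfl
    exact ⟨List.nil_infix, rfl⟩

lemma card_pal_le (v : List ℕ) : (palFinset v).card ≤ v.length + 1 := by
  induction v using List.reverseRecOn with
  | nil => simp [palFinset_nil]
  | append_singleton xs x ih =>
      have h1 := card_pal_dropLast (xs ++ [x])
      rw [List.dropLast_concat] at h1
      calc (palFinset (xs ++ [x])).card ≤ (palFinset xs).card + 1 := h1
      _ ≤ xs.length + 1 + 1 := by omega
      _ = (xs ++ [x]).length + 1 := by simp

lemma rich_dropLast {v : List ℕ} (h : Rich v) (hv : v ≠ []) : Rich v.dropLast := by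
  rw [rich_iff_card] at h ⊢
  have h1 := card_pal_dropLast v
  have h2 := card_pal_le v.dropLast
  have h3 : v.dropLast.length = v.length - 1 := by
    rw [List.length_dropLast]
  have h4 : 1 ≤ v.length := List.length_pos_iff.mpr hv
  omega

lemma rich_prefix {u v : List ℕ} (h : Rich v) (hp : u <+: v) : Rich u := by
  obtain ⟨t, ht⟩ := hp
  induction t using List.reverseRecOn generalizing v with
  | nil => rw [← ht] at h; simpa using h
  | append_singleton ys y ih =>
      have hv : v ≠ [] := by
        intro hnil; rw [hnil] at ht; simp at ht
      have := rich_dropLast h hv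
      apply ih this
      rw [← ht, ← List.append_assoc, List.dropLast_concat]

lemma rich_reverse {v : List ℕ} (h : Rich v) : Rich v.reverse := by
  rw [rich_iff_card] at h ⊢
  rw [pal_reverse, List.length_reverse]
  exact h

lemma rich_infix {u v : List ℕ} (h : Rich v) (hi : u <:+: v) : Rich u := by
  obtain ⟨t, hpre, hsuf⟩ := List.infix_iff_prefix_suffix.mp hi
  have ht : Rich t := by
    have h1 : t.reverse <+: v.reverse := List.reverse_prefix.mpr (by simpa using hsuf)
    have := rich_prefix (rich_reverse h) h1
    have := rich_reverse this
    simpa using this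
  exact rich_prefix ht hpre

/-- In a rich word, there is a new palindromic suffix at the last position. -/
lemma exists_new_pal {v : List ℕ} (h : Rich v) (hv : v ≠ []) :
    ∃ q ∈ palFinset v, q ∉ palFinset v.dropLast ∧ q <:+ v ∧ q.reverse = q ∧ q ≠ [] := by
  have h1 : Rich v.dropLast := rich_dropLast h hv
  rw [rich_iff_card] at h h1
  have hlen : v.dropLast.length = v.length - 1 := List.length_dropLast
  have hpos : 1 ≤ v.length := List.length_pos_iff.mpr hv
  have hcard : (palFinset v.dropLast).card < (palFinset v).card := by omega
  have hsub : palFinset v.dropLast ⊆ palFinset v :=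
    pal_mono (List.dropLast_prefix v).isInfix
  obtain ⟨q, hq, hqd⟩ := Finset.exists_of_ssubset (Finset.ssubset_iff_subset_ne.mpr ⟨hsub, fun he => absurd (congrArg Finset.card he) (by omega)⟩)
  have hqm := mem_palFinset.mp hq
  refine ⟨q, hq, hqd, ?_, hqm.2, ?_⟩
  · exact suffix_of_not_mem_dropLast hqm.1 (fun hh => hqd (mem_palFinset.mpr ⟨hh, hqm.2⟩))
  · rintro rfl
    exact hqd (nil_mem_palFinset _)

lemma suffix_concat_last {q w : List ℕ} {c : ℕ} (hs : q <:+ w ++ [c]) (hne : q ≠ []) :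
    ∃ q₀, q = q₀ ++ [c] := by
  obtain ⟨d, hd⟩ := hs
  rcases List.eq_nil_or_concat q with rfl | ⟨q', e, rfl⟩
  · exact absurd rfl hne
  · rw [List.concat_eq_append, ← List.append_assoc] at hd
    have h2 := (List.append_inj' hd (by simp)).2
    simp only [List.cons.injEq] at h2
    exact ⟨q', by rw [List.concat_eq_append, h2.1]⟩

/-- Key lemma: in a rich word, every complete return to a letter is a palindrome. -/
lemma ret_pal_aux : ∀ N : ℕ, ∀ v : List ℕ, Rich v → ∀ (x h : List ℕ) (c : ℕ),
    v = x ++ [c] ++ h ++ [c] → c ∉ h → v.length ≤ N → h.reverse = h := by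
  intro N
  induction N with
  | zero =>
      intro v _ x h c hv _ hN
      exfalso
      have hL := congrArg List.length hv
      simp at hL
      omega
  | succ N ih =>
      intro v hrich x h c hv hch hN
      have hvne : v ≠ [] := by
        intro hnil; rw [hnil] at hv; simp at hv
      have hdrop : v.dropLast = x ++ [c] ++ h := by
        rw [hv, List.dropLast_concat]
      have hrsuf : ([c] ++ h ++ [c]) <:+ v := ⟨x, by rw [hv]; simp⟩
      obtain ⟨q, hqmem, hqnew, hqsuf, hqpal, hqne⟩ := exists_new_pal hrich hvne
      obtain ⟨q₀, hq₀⟩ : ∃ q₀, q = q₀ ++ [c] :=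
        suffix_concat_last (by rw [hv] at hqsuf; exact hqsuf) hqne
      have hqcons : q = c :: q₀.reverse := by
        conv_lhs => rw [← hqpal, hq₀]
        simp
      rcases suffix_or_suffix hqsuf hrsuf with hcase | hcase
      · -- q is a suffix of the return r
        obtain ⟨d, hd⟩ := hcase
        rcases d with _ | ⟨d₀, d₁⟩
        · -- q = r : done
          simp only [List.nil_append] at hd
          have h1 := hqpal
          rw [hd] at h1
          simp only [List.reverse_append, List.reverse_cons, List.reverse_nil,
            List.nil_append, List.append_assoc, List.cons_append] at h1
          -- h1 should now relate h.reverse and h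
          have h2 : h.reverse ++ [c] = h ++ [c] := by
            have := h1
            simpa using this
          exact (List.append_inj' h2 rfl).1
        · -- q strictly inside r
          rw [hq₀, ← List.append_assoc] at hd
          have h7 := (List.append_inj' hd (by simp)).1
          -- h7 : (d₀ :: d₁) ++ q₀ = [c] ++ h
          have hd₀ : d₀ = c := by
            have := congrArg List.head? h7
            simpa using this
          have hh : d₁ ++ q₀ = h := by
            rw [hd₀] at h7
            simpa using h7
          rcases q₀ with _ | ⟨a, q₁⟩
          · -- q = [c], but c occurs in dropLast
            apply absurd hqnew
            simp only [not_not]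
            rw [mem_palFinset]
            constructor
            · exact ⟨x, h, by rw [hdrop, hq₀]; simp⟩
            · rw [hq₀]; simp
          · have ha : a = c := by
              have := congrArg List.head? (hq₀.symm.trans hqcons)
              simpa using this
            apply absurd hch
            simp only [not_not]
            rw [← hh, ← ha]
            simp
      · -- r is a suffix of q : use reversal and induction
        obtain ⟨E', hE'⟩ := hcase
        rcases E' with _ | ⟨e₀, e₁⟩
        · -- q = r again
          simp only [List.nil_append] at hE'
          have h1 := hqpal
          rw [← hE'] at h1
          simp only [List.reverse_append, List.reverse_cons, List.reverse_nil,
            List.nil_append, List.append_assoc, List.cons_append] at h1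
          have h2 : h.reverse ++ [c] = h ++ [c] := by simpa using h1
          exact (List.append_inj' h2 rfl).1
        · -- r proper suffix of q : reverse of r is a prefix of q
          have hrq : ([c] ++ h ++ [c]) <:+ q := ⟨e₀ :: e₁, hE'⟩
          have hrevpre : ([c] ++ h.reverse ++ [c]) <+: q := by
            have h1 : ([c] ++ h ++ [c]).reverse <+: q.reverse :=
              List.reverse_prefix.mpr (by simpa using hrq)
            rw [hqpal] at h1
            simpa [List.append_assoc] using h1
          obtain ⟨E, hE⟩ := hrevpre
          have hEne : E ≠ [] := by
            intro hEnil
            rw [hEnil, List.append_nil] at hE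
            have l1 := congrArg List.length hE'
            have l2 := congrArg List.length hE
            simp at l1 l2
            omega
          obtain ⟨g, hg⟩ := hqsuf
          have hvE : v = (g ++ [c] ++ h.reverse ++ [c]) ++ E := by
            rw [← hg, ← hE]; simp
          have hpre : (g ++ [c] ++ h.reverse ++ [c]) <+: v := ⟨E, hvE.symm⟩
          have hrich' : Rich (g ++ [c] ++ h.reverse ++ [c]) := rich_prefix hrich hpre
          have hlen' : (g ++ [c] ++ h.reverse ++ [c]).length ≤ N := by
            have hl := congrArg List.length hvE
            simp at hl
            have hE1 : 1 ≤ E.length := List.length_pos_iff.mpr hEne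
            simp only [List.length_append, List.length_cons, List.length_singleton,
              List.length_reverse, List.length_nil]
            omega
          have hres := ih (g ++ [c] ++ h.reverse ++ [c]) hrich' g h.reverse c rfl
            (by simpa using hch) hlen'
          rw [List.reverse_reverse] at hres
          exact hres.symm

/-- Complete returns to a letter in a rich word are palindromes (occurrence form). -/
lemma ret_pal {w : List ℕ} (hrich : Rich w) {x h y : List ℕ} {c : ℕ}
    (hw : w = x ++ [c] ++ h ++ [c] ++ y) (hch : c ∉ h) : h.reverse = h := by
  have hpre : (x ++ [c] ++ h ++ [c]) <+: w := ⟨y, by rw [hw]⟩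
  exact ret_pal_aux (x ++ [c] ++ h ++ [c]).length _ (rich_prefix hrich hpre) x h c rfl hch
    le_rfl

lemma first_split {c : ℕ} : ∀ {l : List ℕ}, c ∈ l → ∃ s t, l = s ++ [c] ++ t ∧ c ∉ s := by
  intro l
  induction l with
  | nil => intro h; simp at h
  | cons a l ih =>
      intro h
      by_cases hac : a = c
      · exact ⟨[], l, by rw [hac]; simp, by simp⟩
      · have : c ∈ l := by
          rcases List.mem_cons.mp h with h1 | h1
          · exact absurd h1.symm hac
          · exact h1
        obtain ⟨s, t, hst, hcs⟩ := ih this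
        exact ⟨a :: s, t, by rw [hst]; simp, by
          simp only [List.mem_cons, not_or]
          exact ⟨fun hh => hac hh.symm, hcs⟩⟩

/-- The center letter of a palindromic factor of a rich square-free word
occurs only once in it. -/
lemma star {w P A B : List ℕ} {c : ℕ} (hrich : Rich w) (hsf : SqFree w)
    (hinf : P <:+: w) (hpal : P.reverse = P) (hP : P = A ++ [c] ++ B)
    (hlen : A.length = B.length) : c ∉ B := by
  intro hcB
  obtain ⟨B₁, B₂, hB, hcB₁⟩ := first_split hcB
  have hA : A = B.reverse := by
    have h1 := hpal
    rw [hP] at h1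
    simp only [List.reverse_append, List.reverse_cons, List.reverse_nil,
      List.nil_append, List.append_assoc, List.singleton_append] at h1
    -- h1 : B.reverse ++ (c :: A.reverse) = A ++ (c :: B)  (roughly)
    have h2 : B.reverse ++ ([c] ++ A.reverse) = A ++ ([c] ++ B) := by simpa using h1
    rw [← List.append_assoc, ← List.append_assoc] at h2
    have h3 := List.append_inj h2 (by simp [hlen])
    have h4 : A ++ [c] = B.reverse ++ [c] := h3.1.symm
    exact (List.append_inj' h4 rfl).1
  obtain ⟨s, t, hst⟩ := hinf
  have hw : w = (s ++ B₂.reverse ++ [c] ++ B₁.reverse) ++ [c] ++ B₁ ++ [c] ++ (B₂ ++ t) := by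
    rw [← hst, hP, hA, hB]
    simp
  have hB₁pal : B₁.reverse = B₁ := ret_pal hrich hw hcB₁
  apply hsf ([c] ++ B₁) (by simp)
  refine ⟨s ++ B₂.reverse, [c] ++ B₂ ++ t, ?_⟩
  rw [hw, hB₁pal]
  simp

lemma even_pal_square {p : List ℕ} (hpal : p.reverse = p) (hne : p ≠ [])
    (hev : p.length % 2 = 0) : ∃ x : ℕ, [x, x] <:+: p := by
  set m := p.length / 2 with hm
  have hmlen : p.length = m + m := by omega
  have hmpos : 1 ≤ m := by
    have : 1 ≤ p.length := List.length_pos_iff.mpr hne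
    omega
  have hsplit : p = p.take m ++ p.drop m := (List.take_append_drop m p).symm
  have hlt : (p.take m).length = m := by
    rw [List.length_take]; omega
  have hld : (p.drop m).length = m := by
    rw [List.length_drop]; omega
  have hrev : (p.drop m).reverse = p.take m := by
    have h1 := hpal
    conv_lhs at h1 => rw [hsplit]
    rw [List.reverse_append] at h1
    conv_rhs at h1 => rw [hsplit]
    have := List.append_inj h1 (by rw [List.length_reverse, hld, hlt])
    exact this.1
  have htne : p.take m ≠ [] := by
    intro hh; rw [hh] at hlt; simp at hlt; omega
  obtain ⟨A₀, a, hA₀⟩ := List.eq_nil_or_concat (p.take m) |>.resolve_left htne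
  refine ⟨a, A₀, A₀.reverse, ?_⟩
  rw [List.concat_eq_append] at hA₀
  have hdrop : p.drop m = [a] ++ A₀.reverse := by
    rw [← List.reverse_reverse (p.drop m), hrev, hA₀]
    simp
  conv_rhs => rw [hsplit, hA₀, hdrop]
  simp

lemma odd_pal_split {p : List ℕ} (hne : p ≠ []) (hodd : p.length % 2 = 1) :
    ∃ (A B : List ℕ) (c : ℕ), p = A ++ [c] ++ B ∧ A.length = B.length ∧
      B.length + B.length + 1 = p.length := by
  set m := p.length / 2 with hm
  have hmlen : p.length = m + m + 1 := by omega
  have hmlt : m < p.length := by omega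
  refine ⟨p.take m, p.drop (m+1), p[m], ?_, ?_, ?_⟩
  · conv_lhs => rw [← List.take_append_drop m p]
    rw [List.drop_eq_getElem_cons hmlt]
    simp
  · rw [List.length_take, List.length_drop]; omega
  · rw [List.length_drop]; omega

/-- Finset of all lists of a given length over a finite set of letters. -/
def allLists (s : Finset ℕ) : ℕ → Finset (List ℕ)
  | 0 => {[]}
  | (n+1) => s.biUnion (fun a => (allLists s n).image (fun l => a :: l))

lemma card_allLists (s : Finset ℕ) : ∀ n, (allLists s n).card ≤ s.card ^ n := by
  intro n
  induction n with
  | zero => simp [allLists]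
  | succ n ih =>
      calc (allLists s (n+1)).card ≤ ∑ a ∈ s, ((allLists s n).image (fun l => a :: l)).card :=
            Finset.card_biUnion_le
      _ ≤ ∑ _a ∈ s, s.card ^ n := by
            apply Finset.sum_le_sum
            intro a _
            exact le_trans (Finset.card_image_le) ih
      _ = s.card ^ (n+1) := by rw [Finset.sum_const, smul_eq_mul]; ring

lemma mem_allLists (s : Finset ℕ) : ∀ (p : List ℕ), (∀ x ∈ p, x ∈ s) → p ∈ allLists s p.length := by
  intro p
  induction p with
  | nil => intro _; simp [allLists]
  | cons a p ih =>
      intro h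
      simp only [List.length_cons, allLists, Finset.mem_biUnion, Finset.mem_image]
      exact ⟨a, h a (by simp), p, ih (fun x hx => h x (by simp [hx])), rfl⟩

/-- Bound on the length of a word all of whose palindromic factors are short. -/
lemma length_le_of_pal_short {w : List ℕ} (hrich : Rich w) (L : ℕ)
    (hshort : ∀ p ∈ palFinset w, p.length ≤ L) (hwne : w ≠ []) :
    w.length + 1 ≤ (L + 1) * w.toFinset.card ^ L := by
  have hsub : palFinset w ⊆ (Finset.range (L+1)).biUnion (allLists w.toFinset) := by
    intro p hp
    rw [Finset.mem_biUnion]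
    refine ⟨p.length, Finset.mem_range.mpr (by have := hshort p hp; omega), ?_⟩
    apply mem_allLists
    intro x hx
    rw [List.mem_toFinset]
    exact (mem_palFinset.mp hp).1.sublist.subset hx
  have hcardpos : 1 ≤ w.toFinset.card := by
    rcases List.exists_mem_of_ne_nil w hwne with ⟨x, hx⟩
    exact Finset.card_pos.mpr ⟨x, List.mem_toFinset.mpr hx⟩
  calc w.length + 1 = (palFinset w).card := (rich_iff_card.mp hrich).symm
  _ ≤ ((Finset.range (L+1)).biUnion (allLists w.toFinset)).card := Finset.card_le_card hsub
  _ ≤ ∑ ℓ ∈ Finset.range (L+1), (allLists w.toFinset ℓ).card := Finset.card_biUnion_le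
  _ ≤ ∑ ℓ ∈ Finset.range (L+1), w.toFinset.card ^ L := by
        apply Finset.sum_le_sum
        intro ℓ hℓ
        calc (allLists w.toFinset ℓ).card ≤ w.toFinset.card ^ ℓ := card_allLists _ _
        _ ≤ w.toFinset.card ^ L :=
            Nat.pow_le_pow_right hcardpos (by exact Nat.lt_succ_iff.mp (Finset.mem_range.mp hℓ))
  _ = (L + 1) * w.toFinset.card ^ L := by rw [Finset.sum_const, Finset.card_range, smul_eq_mul]

/-- The recursive bound function. -/
def F : ℕ → ℕ
  | 0 => 0
  | (n+1) => (2 * F n + 2) * (n + 1) ^ (2 * F n + 1)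

/-- Main upper bound: rich square-free words over at most `n` letters have length
at most `F n`. -/
theorem main_bound : ∀ n : ℕ, ∀ w : List ℕ, Rich w → SqFree w →
    w.toFinset.card ≤ n → w.length ≤ F n := by
  intro n
  induction n with
  | zero =>
      intro w _ _ hcard
      have h0 : w.toFinset = ∅ := Finset.card_eq_zero.mp (Nat.le_zero.mp hcard)
      have hw : w = [] := by
        rcases List.eq_nil_or_concat w with rfl | ⟨w', a, rfl⟩
        · rfl
        · exfalso
          have ha : a ∈ (w'.concat a).toFinset := List.mem_toFinset.mpr (by simp)
          rw [h0] at ha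
          simp at ha
      simp [hw, F]
  | succ n ih =>
      intro w hrich hsf hcard
      by_cases hwne : w = []
      · simp [hwne]
      -- every palindromic factor has length ≤ 2 * F n + 1
      have hshort : ∀ p ∈ palFinset w, p.length ≤ 2 * F n + 1 := by
        intro p hp
        obtain ⟨hpinf, hppal⟩ := mem_palFinset.mp hp
        by_cases hpne : p = []
        · simp [hpne]
        rcases Nat.mod_two_eq_zero_or_one p.length with hev | hodd
        · exfalso
          obtain ⟨x, hx⟩ := even_pal_square hppal hpne hev
          exact hsf [x] (by simp) (by simpa using hx.trans hpinf)
        · obtain ⟨A, B, c, hpABc, hlenAB, hlenp⟩ := odd_pal_split hpne hodd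
          have hcB : c ∉ B := star hrich hsf hpinf hppal hpABc hlenAB
          -- B is a rich square-free word over one fewer letter
          have hBp : B <:+: p := ⟨A ++ [c], [], by rw [hpABc]; simp⟩
          have hBinf : B <:+: w := List.IsInfix.trans hBp hpinf
          have hBrich : Rich B := rich_infix hrich hBinf
          have hBsf : SqFree B := fun u hu hinf => hsf u hu (hinf.trans hBinf)
          have hcw : c ∈ w.toFinset := by
            rw [List.mem_toFinset]
            apply hpinf.sublist.subset
            rw [hpABc]; simp
          have hBsub : B.toFinset ⊆ w.toFinset.erase c := by
            intro x hx
            rw [List.mem_toFinset] at hx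
            rw [Finset.mem_erase]
            constructor
            · rintro rfl; exact hcB hx
            · rw [List.mem_toFinset]
              apply hBinf.sublist.subset hx
          have hBcard : B.toFinset.card ≤ n := by
            calc B.toFinset.card ≤ (w.toFinset.erase c).card := Finset.card_le_card hBsub
            _ = w.toFinset.card - 1 := Finset.card_erase_of_mem hcw
            _ ≤ n := by omega
          have := ih B hBrich hBsf hBcard
          omega
      have hmain := length_le_of_pal_short hrich (2 * F n + 1) hshort hwne
      have hpow : w.toFinset.card ^ (2 * F n + 1) ≤ (n+1) ^ (2 * F n + 1) :=
        Nat.pow_le_pow_left hcard _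
      have : w.length + 1 ≤ (2 * F n + 2) * (n + 1) ^ (2 * F n + 1) := by
        calc w.length + 1 ≤ (2 * F n + 1 + 1) * w.toFinset.card ^ (2 * F n + 1) := hmain
        _ ≤ (2 * F n + 2) * (n + 1) ^ (2 * F n + 1) := by
              apply Nat.mul_le_mul _ hpow
              omega
      rw [F]
      omega

/-! ### The Zimin words -/

/-- The Zimin word on letters `0,…,n-1`. -/
def Z : ℕ → List ℕ
  | 0 => []
  | (n+1) => Z n ++ [n] ++ Z n

lemma Z_length (n : ℕ) : (Z n).length + 1 = 2 ^ n := by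
  induction n with
  | zero => simp [Z]
  | succ n ih => simp [Z, List.length_append, pow_succ]; omega

lemma Z_mem {n x : ℕ} : x ∈ Z n ↔ x < n := by
  induction n with
  | zero => simp [Z]
  | succ n ih =>
      simp only [Z, List.mem_append, List.mem_singleton, ih]
      omega

lemma Z_palindrome (n : ℕ) : (Z n).reverse = Z n := by
  induction n with
  | zero => simp [Z]
  | succ n ih => simp [Z, List.reverse_append, ih]

lemma Z_prefix {k n : ℕ} (h : k ≤ n) : Z k <+: Z n := by
  induction n with
  | zero => rw [Nat.le_zero.mp h]
  | succ n ih =>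
      rcases Nat.lt_or_ge k (n+1) with h1 | h1
      · have := ih (by omega)
        apply this.trans
        exact ⟨[n] ++ Z n, by simp [Z]⟩
      · have : k = n + 1 := by omega
        rw [this]

lemma Z_count (n : ℕ) : (Z (n+1)).count n = 1 := by
  have h0 : (Z n).count n = 0 := List.count_eq_zero.mpr (fun h => by
    have := Z_mem.mp h; omega)
  simp [Z, List.count_append, h0]

lemma Z_toFinset (n : ℕ) : (Z n).toFinset = Finset.range n := by
  ext x
  simp [List.mem_toFinset, Z_mem, Finset.mem_range]

/-- Splitting an infix avoiding a letter. -/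
lemma prefix_avoid {p x y : List ℕ} {a : ℕ} (h : p <+: x ++ [a] ++ y) (ha : a ∉ p) :
    p <+: x := by
  have hx : x <+: x ++ [a] ++ y := ⟨[a] ++ y, by simp⟩
  rcases List.prefix_or_prefix_of_prefix h hx with h1 | h1
  · exact h1
  · obtain ⟨p₂, hp₂⟩ := h1
    rcases p₂ with _ | ⟨b, p₃⟩
    · exact ⟨[], by rw [← hp₂]; simp⟩
    · exfalso
      have h' : x ++ (b :: p₃) <+: x ++ ([a] ++ y) := by
        rw [hp₂]
        simpa [List.append_assoc] using h
      have h2 : (b :: p₃) <+: ([a] ++ y) := (List.prefix_append_right_inj x).mp h'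
      have hb : b = a := (List.cons_prefix_cons.mp (by simpa using h2)).1
      exact ha (by rw [← hp₂, hb]; simp)

lemma infix_split {a : ℕ} : ∀ {x u y : List ℕ}, u <:+: x ++ [a] ++ y → a ∉ u →
    u <:+: x ∨ u <:+: y := by
  intro x
  induction x with
  | nil =>
      intro u y h ha
      simp only [List.nil_append] at h
      rcases List.infix_cons_iff.mp h with h1 | h1
      · rcases u with _ | ⟨u₀, u₁⟩
        · exact Or.inl List.nil_infix
        · exfalso
          have : u₀ = a := (List.cons_prefix_cons.mp h1).1
          exact ha (by rw [this]; simp)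
      · exact Or.inr h1
  | cons b x ih =>
      intro u y h ha
      have h' : u <:+: b :: (x ++ [a] ++ y) := by simpa using h
      rcases List.infix_cons_iff.mp h' with h1 | h1
      · rcases u with _ | ⟨u₀, u₁⟩
        · exact Or.inl List.nil_infix
        · have hcons := List.cons_prefix_cons.mp h1
          have hu₁ : u₁ <+: x := prefix_avoid hcons.2 (fun hh => ha (by simp [hh]))
          left
          rw [hcons.1]
          obtain ⟨t, ht⟩ := hu₁
          exact ⟨[], t, by rw [← ht]; simp⟩
      · rcases ih h1 ha with h2 | h2
        · exact Or.inl (h2.trans ⟨[b], [], by simp⟩)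
        · exact Or.inr h2

theorem Z_sqfree (n : ℕ) : SqFree (Z n) := by
  induction n with
  | zero =>
      intro u hu hinf
      apply hu
      have := hinf.sublist.length_le
      simp [Z] at this
      rcases u with _ | _
      · rfl
      · simp at this
  | succ n ih =>
      intro u hu hinf
      by_cases hn : n ∈ u
      · have hc := hinf.count_le n
        rw [show Z (n+1) = Z n ++ [n] ++ Z n from rfl] at hc
        have h1 : 1 ≤ u.count n := List.one_le_count_iff.mpr hn
        have h2 : (u ++ u).count n = u.count n + u.count n := List.count_append
        have h3 := Z_count n
        rw [show Z n ++ [n] ++ Z n = Z (n+1) from rfl, h3] at hc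
        omega
      · have hnu : n ∉ u ++ u := by simp [hn]
        rcases infix_split (by simpa [Z] using hinf) hnu with h1 | h1
        · exact ih u hu h1
        · exact ih u hu h1

/-- Central palindromic factors of the Zimin words. -/
def zm (k i : ℕ) : List ℕ := ((Z k).take i).reverse ++ [k] ++ (Z k).take i

lemma zm_length {k i : ℕ} (h : i < 2 ^ k) : (zm k i).length = 2 * i + 1 := by
  have hlen := Z_length k
  have : ((Z k).take i).length = i := by
    rw [List.length_take]
    omega
  simp [zm, this]
  omega

lemma zm_pal (k i : ℕ) : (zm k i).reverse = zm k i := by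
  simp [zm, List.reverse_append]

lemma zm_mem {k i x : ℕ} (h : x ∈ zm k i) : x ≤ k := by
  simp only [zm, List.mem_append, List.mem_reverse, List.mem_singleton] at h
  rcases h with (h | h) | h
  · exact le_of_lt (Z_mem.mp (List.mem_of_mem_take h))
  · omega
  · exact le_of_lt (Z_mem.mp (List.mem_of_mem_take h))

lemma zm_center_mem (k i : ℕ) : k ∈ zm k i := by simp [zm]

lemma zm_infix {k i n : ℕ} (hk : k < n) (hi : i < 2 ^ k) : zm k i <:+: Z n := by
  have step : zm k i <:+: Z (k+1) := by
    have hlen := Z_length k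
    have hi' : i ≤ (Z k).length := by omega
    have h1 : ((Z k).take i).reverse = (Z k).drop ((Z k).length - i) := by
      rw [List.reverse_take, Z_palindrome]
    have e1 : (Z k).take ((Z k).length - i) ++ ((Z k).take i).reverse = Z k := by
      rw [h1, List.take_append_drop]
    have e2 : (Z k).take i ++ (Z k).drop i = Z k := List.take_append_drop i (Z k)
    have key : (Z k).take ((Z k).length - i) ++ zm k i ++ (Z k).drop i
        = Z k ++ [k] ++ Z k := by
      calc (Z k).take ((Z k).length - i) ++ zm k i ++ (Z k).drop i
          = ((Z k).take ((Z k).length - i) ++ ((Z k).take i).reverse) ++ [k]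
              ++ ((Z k).take i ++ (Z k).drop i) := by
            simp [zm, List.append_assoc]
        _ = Z k ++ [k] ++ Z k := by rw [e1, e2]
    exact ⟨(Z k).take ((Z k).length - i), (Z k).drop i, key⟩
  exact step.trans (Z_prefix (by omega)).isInfix

/-- The palindromic factors of a Zimin word. -/
def zimPals (n : ℕ) : Finset (List ℕ) :=
  insert [] ((Finset.range n).biUnion
    (fun k => (Finset.range (2 ^ k)).image (fun i => zm k i)))

lemma unique_center : ∀ (A : List ℕ) {B C D : List ℕ} {n : ℕ},
    A ++ [n] ++ B = C ++ [n] ++ D → n ∉ A → n ∉ C → A = C ∧ B = D := by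
  intro A
  induction A with
  | nil =>
      intro B C D n h hA hC
      rcases C with _ | ⟨c₀, C'⟩
      · simpa using h
      · exfalso
        have : n = c₀ := by
          have := congrArg List.head? h
          simpa using this
        exact hC (by rw [← this]; simp)
  | cons a A' ih =>
      intro B C D n h hA hC
      rcases C with _ | ⟨c₀, C'⟩
      · exfalso
        have : a = n := by
          have := congrArg List.head? h
          simpa using this
        exact hA (by rw [this]; simp)
      · have hh : a = c₀ := by
          have := congrArg List.head? h
          simpa using this
        have htail : A' ++ [n] ++ B = C' ++ [n] ++ D := by
          have := congrArg List.tail h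
          simpa using this
        obtain ⟨h1, h2⟩ := ih htail (fun hx => hA (by simp [hx])) (fun hx => hC (by simp [hx]))
        exact ⟨by rw [hh, h1], h2⟩

lemma palFinset_Z (n : ℕ) : palFinset (Z n) = zimPals n := by
  induction n with
  | zero =>
      rw [show Z 0 = [] from rfl, palFinset_nil]
      ext p
      simp [zimPals]
  | succ n ih =>
      ext p
      simp only [mem_palFinset]
      constructor
      · rintro ⟨hinf, hpal⟩
        by_cases hn : n ∈ p
        · -- p contains the central letter exactly once
          obtain ⟨A, B, hAB, hnA⟩ := first_split hn
          have hcount : p.count n = 1 := by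
            have hle := hinf.count_le n
            rw [Z_count n] at hle
            have : 1 ≤ p.count n := List.one_le_count_iff.mpr hn
            omega
          have hnB : n ∉ B := by
            intro hB
            rw [hAB] at hcount
            simp [List.count_append] at hcount
            have h1 : 1 ≤ A.count n + B.count n := by
              have := List.one_le_count_iff.mpr hB
              omega
            omega
          -- A = B.reverse
          have hArev : A = B.reverse := by
            have h1 := hpal
            rw [hAB] at h1
            simp only [List.reverse_append, List.reverse_cons, List.reverse_nil,
              List.nil_append, List.append_assoc, List.singleton_append] at h1
            have h2 : B.reverse ++ ([n] ++ A.reverse) = A ++ ([n] ++ B) := by simpa using h1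
            rw [← List.append_assoc, ← List.append_assoc] at h2
            obtain ⟨hX, _⟩ := unique_center B.reverse h2 (by simpa using hnB) hnA
            exact hX.symm
          -- locate the occurrence
          obtain ⟨s, t, hst⟩ := hinf
          have hst' : (s ++ A) ++ [n] ++ (B ++ t) = Z n ++ [n] ++ Z n := by
            rw [hAB] at hst
            rw [show Z (n+1) = Z n ++ [n] ++ Z n from rfl] at hst
            simpa [List.append_assoc] using hst
          have hns : n ∉ s ++ A := by
            intro hmem
            have hc := congrArg (List.count n) hst'
            have h3 : (Z n).count n = 0 := List.count_eq_zero.mpr (fun h => by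
              have := Z_mem.mp h; omega)
            simp [List.count_append, h3] at hc
            have h4 : 1 ≤ (s ++ A).count n := List.one_le_count_iff.mpr hmem
            simp [List.count_append] at h4
            omega
          have hnZ : n ∉ Z n := fun h => by have := Z_mem.mp h; omega
          obtain ⟨hL, hR⟩ := unique_center (s ++ A) hst' hns hnZ
          -- B is a prefix of Z n
          have hBpre : B = (Z n).take B.length := by
            have : B <+: Z n := ⟨t, hR⟩
            exact List.prefix_iff_eq_take.mp this
          have hBlen : B.length < 2 ^ n := by
            have h5 := congrArg List.length hR
            have h6 := Z_length n
            simp [List.length_append] at h5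
            omega
          rw [zimPals]
          apply Finset.mem_insert_of_mem
          rw [Finset.mem_biUnion]
          refine ⟨n, Finset.mem_range.mpr (by omega), ?_⟩
          rw [Finset.mem_image]
          refine ⟨B.length, Finset.mem_range.mpr hBlen, ?_⟩
          rw [zm, ← hBpre, ← hArev, ← hAB]
        · -- p avoids the central letter
          have h1 : p <:+: Z n := by
            rcases infix_split (by simpa [Z] using hinf) hn with h | h
            · exact h
            · exact h
          have h2 : p ∈ palFinset (Z n) := mem_palFinset.mpr ⟨h1, hpal⟩
          rw [ih] at h2
          -- zimPals is monotone
          rcases Finset.mem_insert.mp h2 with h3 | h3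
          · rw [zimPals]; exact Finset.mem_insert.mpr (Or.inl h3)
          · rw [zimPals]
            apply Finset.mem_insert_of_mem
            rw [Finset.mem_biUnion] at h3 ⊢
            obtain ⟨k, hk, hmem⟩ := h3
            exact ⟨k, Finset.mem_range.mpr (by have := Finset.mem_range.mp hk; omega), hmem⟩
      · intro hp
        rcases Finset.mem_insert.mp hp with rfl | h3
        · exact ⟨List.nil_infix, rfl⟩
        · rw [Finset.mem_biUnion] at h3
          obtain ⟨k, hk, hmem⟩ := h3
          rw [Finset.mem_image] at hmem
          obtain ⟨i, hi, rfl⟩ := hmem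
          exact ⟨zm_infix (Finset.mem_range.mp hk) (Finset.mem_range.mp hi), zm_pal k i⟩

lemma sum_two_pow (n : ℕ) : (∑ k ∈ Finset.range n, 2 ^ k) + 1 = 2 ^ n := by
  induction n with
  | zero => simp
  | succ n ih => rw [Finset.sum_range_succ, pow_succ]; omega

lemma zimPals_card (n : ℕ) : (zimPals n).card = 2 ^ n := by
  rw [zimPals]
  rw [Finset.card_insert_of_notMem]
  · rw [Finset.card_biUnion]
    · have : ∀ k ∈ Finset.range n,
          ((Finset.range (2 ^ k)).image (fun i => zm k i)).card = 2 ^ k := by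
        intro k _
        rw [Finset.card_image_of_injOn, Finset.card_range]
        intro i hi j hj hij
        have h1 := zm_length (Finset.mem_range.mp hi)
        have h2 := zm_length (Finset.mem_range.mp hj)
        have := congrArg List.length hij
        rw [h1, h2] at this
        omega
      rw [Finset.sum_congr rfl this]
      exact sum_two_pow n
    · intro k hk k' hk' hne
      rw [Function.onFun, Finset.disjoint_left]
      intro p hp hp'
      rw [Finset.mem_image] at hp hp'
      obtain ⟨i, _, rfl⟩ := hp
      obtain ⟨i', _, heq⟩ := hp'
      apply hne
      have h1 : k' ≤ k := zm_mem (heq ▸ zm_center_mem k' i')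
      have h2 : k ≤ k' := by
        have := zm_center_mem k i
        rw [← heq] at this
        exact zm_mem this
      omega
  · rw [Finset.mem_biUnion]
    rintro ⟨k, hk, hmem⟩
    rw [Finset.mem_image] at hmem
    obtain ⟨i, hi, heq⟩ := hmem
    have := zm_length (Finset.mem_range.mp hi)
    rw [heq] at this
    simp at this

theorem Z_rich (n : ℕ) : Rich (Z n) := by
  rw [rich_iff_card, palFinset_Z, zimPals_card]
  exact (Z_length n).symm

end RichSqf

theorem rsf_ge_two_pow_sub_one (n : ℕ) (hn : 1 ≤ n) :
    (∃ w : List ℕ, Rich w ∧ SqFree w ∧ w.toFinset.card = n ∧ 2 ^ n - 1 ≤ w.length) ∧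
    2 ^ n - 1 ≤ rsf n := by
  have hlen : (RichSqf.Z n).length = 2 ^ n - 1 := by
    have := RichSqf.Z_length n; omega
  have hcard : (RichSqf.Z n).toFinset.card = n := by
    rw [RichSqf.Z_toFinset]; simp
  constructor
  · exact ⟨RichSqf.Z n, RichSqf.Z_rich n, RichSqf.Z_sqfree n, hcard, by rw [hlen]⟩
  · have hmem : (2 ^ n - 1) ∈
        {L | ∃ w : List ℕ, Rich w ∧ SqFree w ∧ w.toFinset.card = n ∧ w.length = L} :=
      ⟨RichSqf.Z n, RichSqf.Z_rich n, RichSqf.Z_sqfree n, hcard, hlen⟩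
    have hbdd : BddAbove
        {L | ∃ w : List ℕ, Rich w ∧ SqFree w ∧ w.toFinset.card = n ∧ w.length = L} := by
      refine ⟨RichSqf.F n, ?_⟩
      rintro L ⟨w, h1, h2, h3, h4⟩
      rw [← h4]
      exact RichSqf.main_bound n w h1 h2 (le_of_eq h3)
    exact le_csSup hbdd hmem
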